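/- Let C be a spherically complete nonarchimedean field with ring of integers 𝒪_C (a valuation ring). Then for any inverse system (tower) {M_i}_{i≥1} of cyclic 𝒪_C-modules with arbitrary transition maps, the derived inverse limit satisfies lim¹ M_i = 0. -/

import Mathlib

open Metric in
/-- The ring of integers `𝒪_C = {x : ‖x‖ ≤ 1}` of a nonarchimedean normed
field. -/
def ringOfIntegers (C : Type*) [NormedField C] [IsUltrametricDist C] :
    Subring C where
  carrier := {x : C | ‖x‖ ≤ 1}
  mul_mem' {a b} ha hb := by
    simpa using mul_le_one₀ ha (norm_nonneg b) hb
  one_mem' := by simp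
  add_mem' {a b} ha hb := by
    simpa using (IsUltrametricDist.norm_add_le_max a b).trans (max_le ha hb)
  zero_mem' := by simp
  neg_mem' {a} ha := by simpa using ha

section KeyLemma

variable {C : Type*} [NormedField C] [IsUltrametricDist C]

theorem key_recurrence
    (hsph : ∀ (x : ℕ → C) (r : ℕ → ℝ), (∀ n, 0 ≤ r n) →
      (∀ n, Metric.closedBall (x (n + 1)) (r (n + 1)) ⊆
        Metric.closedBall (x n) (r n)) →
      (⋂ n, Metric.closedBall (x n) (r n)).Nonempty)
    (a b : ℕ → C) (ha : ∀ i, ‖a i‖ ≤ 1) (hb : ∀ i, ‖b i‖ ≤ 1) :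
    ∃ c : ℕ → C, (∀ i, ‖c i‖ ≤ 1) ∧ ∀ i, c i = b i + a i * c (i + 1) := by
  classical
  set A : ℕ → ℕ → C := fun i N => ∏ k ∈ Finset.Ico i N, a k with hA
  set s : ℕ → ℕ → C := fun i N => ∑ k ∈ Finset.Ico i N, A i k * b k with hs
  have hAii : ∀ i, A i i = 1 := by intro i; simp [hA]
  have hAsucc : ∀ i N, i ≤ N → A i (N + 1) = A i N * a N := by
    intro i N h; simp [hA, Finset.prod_Ico_succ_top h]
  have hAbot : ∀ i N, i + 1 ≤ N → A i N = a i * A (i + 1) N := by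
    intro i N h; simp [hA, Finset.prod_eq_prod_Ico_succ_bot (Nat.lt_of_succ_le h)]
  have hAnorm : ∀ i N, ‖A i N‖ ≤ 1 := by
    intro i N
    rw [hA]
    simp only [norm_prod]
    exact Finset.prod_le_one (fun k _ => norm_nonneg _) (fun k _ => ha k)
  have hAanti : ∀ i N, i ≤ N → ‖A i (N + 1)‖ ≤ ‖A i N‖ := by
    intro i N h
    rw [hAsucc i N h, norm_mul]
    exact mul_le_of_le_one_right (norm_nonneg _) (ha N)
  have hsii : ∀ i, s i i = 0 := by intro i; simp [hs]
  have hssucc : ∀ i N, i ≤ N → s i (N + 1) = s i N + A i N * b N := by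
    intro i N h; simp [hs, Finset.sum_Ico_succ_top h]
  have hsbot : ∀ i N, i + 1 ≤ N → s i N = b i + a i * s (i + 1) N := by
    intro i N h
    rw [hs]
    simp only
    rw [Finset.sum_eq_sum_Ico_succ_bot (Nat.lt_of_succ_le h), hAii, one_mul,
      Finset.mul_sum]
    congr 1
    refine Finset.sum_congr rfl fun k hk => ?_
    rw [hAbot i k (Finset.mem_Ico.mp hk).1, mul_assoc]
  -- invariant
  set inv : ℕ → C → Prop := fun i c => ∀ N, i ≤ N → ‖c - s i N‖ ≤ ‖A i N‖ with hinvdef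
  have init : ∀ i, ∃ c, inv i c := by
    intro i
    have hnest : ∀ n, Metric.closedBall (s i (i + (n + 1))) ‖A i (i + (n + 1))‖ ⊆
        Metric.closedBall (s i (i + n)) ‖A i (i + n)‖ := by
      intro n z hz
      rw [Metric.mem_closedBall, dist_eq_norm] at hz ⊢
      have h1 : z - s i (i + n) = (z - s i (i + n + 1)) + (s i (i + n + 1) - s i (i + n)) := by
        ring
      rw [h1]
      refine (IsUltrametricDist.norm_add_le_max _ _).trans (max_le ?_ ?_)
      · exact hz.trans (hAanti i (i + n) (Nat.le_add_right i n))
      · rw [hssucc i (i + n) (Nat.le_add_right i n)]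
        rw [add_sub_cancel_left, norm_mul]
        exact mul_le_of_le_one_right (norm_nonneg _) (hb _)
    obtain ⟨c, hc⟩ := hsph (fun n => s i (i + n)) (fun n => ‖A i (i + n)‖)
      (fun n => norm_nonneg _) hnest
    refine ⟨c, fun N hN => ?_⟩
    have hmem := Set.mem_iInter.mp hc (N - i)
    rw [Metric.mem_closedBall, dist_eq_norm] at hmem
    rwa [Nat.add_sub_cancel' hN] at hmem
  have step : ∀ i c, inv i c → ∃ c', inv (i + 1) c' ∧ c = b i + a i * c' := by
    intro i c hc
    by_cases hai : a i = 0
    · obtain ⟨c', hc'⟩ := init (i + 1)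
      refine ⟨c', hc', ?_⟩
      have h1 := hc (i + 1) (Nat.le_succ i)
      rw [hssucc i i le_rfl, hAsucc i i le_rfl, hsii, hAii, hai] at h1
      simp only [mul_zero, norm_zero, zero_add, one_mul] at h1
      rw [hai, zero_mul, add_zero]
      exact sub_eq_zero.mp (norm_le_zero_iff.mp h1)
    · refine ⟨(c - b i) / a i, ?_, by field_simp; ring⟩
      intro N hN
      have h1 : c - s i N = a i * ((c - b i) / a i - s (i + 1) N) := by
        rw [hsbot i N hN]
        field_simp
        ring
      have h2 := hc N (Nat.le_of_succ_le hN)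
      rw [h1, norm_mul, hAbot i N hN, norm_mul] at h2
      exact le_of_mul_le_mul_left h2 (norm_pos_iff.mpr hai)
  obtain ⟨F, hF⟩ : ∃ F : ∀ i, {c : C // inv i c} → {c' : C // inv (i + 1) c'},
      ∀ i (p : {c : C // inv i c}), p.1 = b i + a i * (F i p).1 := by
    choose F h1 h2 using fun i (p : {c : C // inv i c}) => step i p.1 p.2
    exact ⟨fun i p => ⟨F i p, h1 i p⟩, h2⟩
  obtain ⟨c0, hc0⟩ := init 0
  let seq : ∀ i, {c : C // inv i c} := fun i => Nat.rec ⟨c0, hc0⟩ F i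
  have hseq : ∀ i, seq (i + 1) = F i (seq i) := fun i => rfl
  refine ⟨fun i => (seq i).1, fun i => ?_, fun i => ?_⟩
  · have h := (seq i).2 i le_rfl
    rwa [hsii, sub_zero, hAii, norm_one] at h
  · exact hF i (seq i)

end KeyLemma

/-- Let `C` be a spherically complete nonarchimedean field
with ring of integers `𝒪_C`.  For any tower `{M_i}` of cyclic `𝒪_C`-modules
(with arbitrary transition maps `f i : M (i+1) → M i`), we have
`lim¹ M_i = 0`, i.e. the map `(x_i) ↦ (x_i - f_i (x_{i+1}))` on `∏ M_i` is
surjective. -/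
theorem stmt6 (C : Type*) [NormedField C] [IsUltrametricDist C]
    (hsph : ∀ (x : ℕ → C) (r : ℕ → ℝ), (∀ n, 0 ≤ r n) →
      (∀ n, Metric.closedBall (x (n + 1)) (r (n + 1)) ⊆
        Metric.closedBall (x n) (r n)) →
      (⋂ n, Metric.closedBall (x n) (r n)).Nonempty)
    (M : ℕ → Type*) [∀ i, AddCommGroup (M i)]
    [∀ i, Module (ringOfIntegers C) (M i)]
    (hcyc : ∀ i, ∃ m : M i, ∀ y : M i, ∃ r : ringOfIntegers C, r • m = y)
    (f : ∀ i, M (i + 1) →ₗ[ringOfIntegers C] M i) :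
    Function.Surjective
      (fun x : (∀ i, M i) => fun i => x i - f i (x (i + 1))) := by
  intro y
  choose m hm using hcyc
  choose bb hbb using fun i => hm i (y i)
  choose aa haa using fun i => hm i ((f i) (m (i + 1)))
  have hanorm : ∀ i, ‖(aa i : C)‖ ≤ 1 := fun i => (aa i).2
  have hbnorm : ∀ i, ‖(bb i : C)‖ ≤ 1 := fun i => (bb i).2
  obtain ⟨c, hc1, hc2⟩ := key_recurrence hsph (fun i => (aa i : C))
    (fun i => (bb i : C)) hanorm hbnorm
  have hcmem : ∀ i, c i ∈ ringOfIntegers C := fun i => hc1 i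
  refine ⟨fun i => (⟨c i, hcmem i⟩ : ringOfIntegers C) • m i, ?_⟩
  funext i
  have hci : (⟨c i, hcmem i⟩ : ringOfIntegers C)
      = bb i + aa i * ⟨c (i + 1), hcmem (i + 1)⟩ := by
    ext
    push_cast
    exact hc2 i
  simp only
  rw [map_smul, ← haa i, smul_comm, hci, add_smul, mul_smul, add_sub_cancel_right, hbb i]
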